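/- arXiv:1901.10528 — 2 statements merged into one kernel-verified Lean document; each statement's English description precedes it below -/
import Mathlib

section
/- For all natural numbers n ≥ 1 and integers k with 3 ≤ k ≤ n, define B{n,k} := (1/((k-1)!·(n-k)!)) · ∫₀^π (sin x)^(k-1) x^(n-k) dx. Then B{n,k-2} - B{n,k} = (k-1)² · B{n+2,k}. -/
open Real

section Aux
open intervalIntegral

lemma intg (a b : ℕ) : IntervalIntegrable (fun x => Real.sin x ^ a * x ^ b)
    MeasureTheory.volume 0 π :=
  ((continuous_sin.pow a).mul (continuous_pow b)).intervalIntegrable _ _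

lemma key (l m : ℕ) :
    ((l:ℝ)+2)*((l:ℝ)+1) * (∫ x in (0:ℝ)..π, Real.sin x ^ l * x ^ (m+2))
      = ((l:ℝ)+2)^2 * (∫ x in (0:ℝ)..π, Real.sin x ^ (l+2) * x ^ (m+2))
        + ((m:ℝ)+2)*((m:ℝ)+1) * (∫ x in (0:ℝ)..π, Real.sin x ^ (l+2) * x ^ m) := by
  set f' : ℝ → ℝ := fun x =>
    ((l:ℝ)+2)*((l:ℝ)+1) * (Real.sin x ^ l * x ^ (m+2))
      - ((l:ℝ)+2)^2 * (Real.sin x ^ (l+2) * x ^ (m+2))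
      - ((m:ℝ)+2)*((m:ℝ)+1) * (Real.sin x ^ (l+2) * x ^ m) with hf'
  have hderiv : ∀ x ∈ Set.uIcc (0:ℝ) π,
      HasDerivAt (fun x => ((l:ℝ)+2) * (Real.sin x ^ (l+1) * Real.cos x * x ^ (m+2))
        - ((m:ℝ)+2) * (Real.sin x ^ (l+2) * x ^ (m+1))) (f' x) x := by
    intro x _
    have h1 : HasDerivAt (fun x => Real.sin x ^ (l+1))
        (((l:ℝ)+1) * Real.sin x ^ l * Real.cos x) x := by
      simpa using (Real.hasDerivAt_sin x).fun_pow (l+1)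
    have h2 : HasDerivAt (fun x => Real.sin x ^ (l+2))
        (((l:ℝ)+2) * Real.sin x ^ (l+1) * Real.cos x) x := by
      simpa using (Real.hasDerivAt_sin x).fun_pow (l+2)
    have h3 := hasDerivAt_pow (m+2) x
    have h4 := hasDerivAt_pow (m+1) x
    have hA := (((h1.mul (Real.hasDerivAt_cos x)).mul h3).const_mul ((l:ℝ)+2))
    have hB := ((h2.mul h4).const_mul ((m:ℝ)+2))
    have h : HasDerivAt (fun x => ((l:ℝ)+2) * (Real.sin x ^ (l+1) * Real.cos x * x ^ (m+2))
        - ((m:ℝ)+2) * (Real.sin x ^ (l+2) * x ^ (m+1))) _ x := hA.sub hB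
    convert h using 1
    have hcos : Real.cos x ^ 2 = 1 - Real.sin x ^ 2 := Real.cos_sq' x
    simp only [hf', Pi.mul_apply]
    push_cast
    linear_combination (-((l:ℝ)+2)*((l:ℝ)+1) * Real.sin x ^ l * x ^ (m+2)) * hcos
  have hint : IntervalIntegrable f' MeasureTheory.volume 0 π := by
    apply Continuous.intervalIntegrable
    fun_prop
  have H := intervalIntegral.integral_eq_sub_of_hasDerivAt hderiv hint
  have hsimp : (∫ x in (0:ℝ)..π, f' x) = 0 := by
    rw [H]; simp [Real.sin_pi]
  have hsplit : (∫ x in (0:ℝ)..π, f' x)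
      = ((l:ℝ)+2)*((l:ℝ)+1) * (∫ x in (0:ℝ)..π, Real.sin x ^ l * x ^ (m+2))
        - ((l:ℝ)+2)^2 * (∫ x in (0:ℝ)..π, Real.sin x ^ (l+2) * x ^ (m+2))
        - ((m:ℝ)+2)*((m:ℝ)+1) * (∫ x in (0:ℝ)..π, Real.sin x ^ (l+2) * x ^ m) := by
    simp only [hf']
    rw [intervalIntegral.integral_sub (((intg l (m+2)).const_mul _).sub
        ((intg (l+2) (m+2)).const_mul _)) ((intg (l+2) m).const_mul _),
      intervalIntegral.integral_sub ((intg l (m+2)).const_mul _)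
        ((intg (l+2) (m+2)).const_mul _),
      intervalIntegral.integral_const_mul, intervalIntegral.integral_const_mul,
      intervalIntegral.integral_const_mul]
  rw [hsplit] at hsimp
  linarith

end Aux

/-- The normalized sine-moment integral `B{n,k}` from the paper. -/
noncomputable def B (n k : ℕ) : ℝ :=
  (1 / (((k - 1).factorial : ℝ) * ((n - k).factorial : ℝ))) *
    ∫ x in (0:ℝ)..π, Real.sin x ^ (k - 1) * x ^ (n - k)

theorem B_recurrence (n k : ℕ) (hn : 1 ≤ n) (hk : 3 ≤ k) (hkn : k ≤ n) :
    B n (k - 2) - B n k = ((k : ℝ) - 1) ^ 2 * B (n + 2) k := by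
  obtain ⟨l, rfl⟩ : ∃ l, k = l + 3 := ⟨k - 3, by omega⟩
  obtain ⟨m, rfl⟩ : ∃ m, n = (l + 3) + m := ⟨n - (l + 3), by omega⟩
  simp only [B]
  have e1 : l + 3 - 1 = l + 2 := by omega
  have e2 : l + 3 - 2 = l + 1 := by omega
  have e3 : l + 1 - 1 = l := by omega
  have e4 : l + 3 + m - (l + 3) = m := by omega
  have e5 : l + 3 + m - (l + 1) = m + 2 := by omega
  have e6 : l + 3 + m + 2 - (l + 3) = m + 2 := by omega
  rw [e1, e2, e3, e4, e5, e6]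
  have hK := key l m
  set I1 := ∫ x in (0:ℝ)..π, Real.sin x ^ l * x ^ (m + 2) with hI1
  set I2 := ∫ x in (0:ℝ)..π, Real.sin x ^ (l + 2) * x ^ (m + 2) with hI2
  set I3 := ∫ x in (0:ℝ)..π, Real.sin x ^ (l + 2) * x ^ m with hI3
  have hFl2 : ((l + 2).factorial : ℝ) = ((l:ℝ)+2) * (((l:ℝ)+1) * (l.factorial : ℝ)) := by
    rw [show l + 2 = (l+1) + 1 from rfl, Nat.factorial_succ, Nat.factorial_succ]
    push_cast; ring
  have hFm2 : ((m + 2).factorial : ℝ) = ((m:ℝ)+2) * (((m:ℝ)+1) * (m.factorial : ℝ)) := by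
    rw [show m + 2 = (m+1) + 1 from rfl, Nat.factorial_succ, Nat.factorial_succ]
    push_cast; ring
  have hFl : (l.factorial : ℝ) ≠ 0 := Nat.cast_ne_zero.mpr l.factorial_ne_zero
  have hFm : (m.factorial : ℝ) ≠ 0 := Nat.cast_ne_zero.mpr m.factorial_ne_zero
  rw [hFl2, hFm2]
  push_cast
  have hl2 : ((l:ℝ)+2) ≠ 0 := by positivity
  have hl1 : ((l:ℝ)+1) ≠ 0 := by positivity
  have hm2 : ((m:ℝ)+2) ≠ 0 := by positivity
  have hm1 : ((m:ℝ)+1) ≠ 0 := by positivity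
  field_simp
  linear_combination hK
end

section
/- For all d ≥ 1 and k ∈ ℕ with 1 ≤ k, the normalized integral B{n,k} := (1/((k-1)!(n-k)!))∫₀^π (sin x)^(k-1) x^(n-k) dx satisfies lim_{n→∞} B{n,k}/(π^n/n!) = 1 for each fixed k. -/
open Real Filter

lemma sub_cube_le_sin {x : ℝ} (hx : 0 ≤ x) : x - x ^ 3 / 6 ≤ Real.sin x := by
  have hderiv : ∀ t : ℝ, HasDerivAt (fun t : ℝ => Real.sin t - t + t ^ 3 / 6)
      (Real.cos t - 1 + t ^ 2 / 2) t := by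
    intro t
    have h1 : HasDerivAt (fun t : ℝ => t ^ 3 / 6) (3 * t ^ 2 / 6) t :=
      (hasDerivAt_pow 3 t).div_const 6
    have := ((Real.hasDerivAt_sin t).sub (hasDerivAt_id t)).add h1
    exact this.congr_deriv (by ring)
  have hmono : MonotoneOn (fun t : ℝ => Real.sin t - t + t ^ 3 / 6) (Set.Ici 0) :=
    monotoneOn_of_deriv_nonneg (convex_Ici 0) (by fun_prop)
      (fun t _ => (hderiv t).differentiableAt.differentiableWithinAt)
      (fun t _ => by
        rw [(hderiv t).deriv]
        nlinarith [Real.one_sub_sq_div_two_le_cos (x := t)])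
  have := hmono Set.self_mem_Ici (Set.mem_Ici.2 hx) hx
  simp at this
  linarith

lemma beta_pi (a b : ℕ) : (∫ x in (0:ℝ)..π, (π - x) ^ a * x ^ b)
    = π ^ (a + b + 1) * a.factorial * b.factorial / (a + b + 1).factorial := by
  induction b generalizing a with
  | zero =>
      simp only [pow_zero, mul_one]
      rw [intervalIntegral.integral_comp_sub_left (fun y => y ^ a) π]
      simp [integral_pow, Nat.factorial_succ]
      field_simp
  | succ b ih =>
      have hd : ∀ x : ℝ, HasDerivAt (fun y => -((π - y) ^ (a + 1)) / ((a : ℝ) + 1))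
          ((π - x) ^ a) x := by
        intro x
        have h0 : HasDerivAt (fun y : ℝ => π - y) (-1) x := (hasDerivAt_id x).const_sub π
        have h1 := (h0.pow (a + 1)).neg.div_const ((a : ℝ) + 1)
        refine h1.congr_deriv ?_
        have : ((a:ℝ) + 1) ≠ 0 := by positivity
        push_cast
        field_simp
      have hu : ∀ x : ℝ, HasDerivAt (fun y : ℝ => y ^ (b + 1)) (((b:ℝ) + 1) * x ^ b) x := by
        intro x
        have := hasDerivAt_pow (b + 1) x
        refine this.congr_deriv ?_
        push_cast; ring
      have ibp := intervalIntegral.integral_mul_deriv_eq_deriv_mul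
        (u := fun y : ℝ => y ^ (b + 1)) (u' := fun x => ((b:ℝ) + 1) * x ^ b)
        (v := fun y => -((π - y) ^ (a + 1)) / ((a : ℝ) + 1)) (v' := fun x => (π - x) ^ a)
        (a := (0:ℝ)) (b := π)
        (fun x _ => hu x) (fun x _ => hd x)
        (by apply Continuous.intervalIntegrable; fun_prop)
        (by apply Continuous.intervalIntegrable; fun_prop)
      have hcomm : (∫ x in (0:ℝ)..π, (π - x) ^ a * x ^ (b + 1))
          = ∫ x in (0:ℝ)..π, x ^ (b + 1) * (π - x) ^ a := by
        congr 1; ext x; ring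
      rw [hcomm, ibp]
      have hi2 : (∫ x in (0:ℝ)..π, ((b:ℝ) + 1) * x ^ b * (-((π - x) ^ (a + 1)) / ((a:ℝ) + 1)))
          = -(((b:ℝ) + 1) / ((a:ℝ) + 1)) * ∫ x in (0:ℝ)..π, (π - x) ^ (a + 1) * x ^ b := by
        rw [← intervalIntegral.integral_const_mul]
        congr 1; ext x
        have : ((a:ℝ) + 1) ≠ 0 := by positivity
        field_simp
      rw [hi2, ih (a + 1)]
      have ha : ((a:ℝ) + 1) ≠ 0 := by positivity
      have h1 : ((a + 1) + b + 1) = a + (b+1) + 1 := by omega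
      rw [h1]
      have hfa : ((a+1).factorial : ℝ) = ((a:ℝ)+1) * a.factorial := by
        rw [Nat.factorial_succ]; push_cast; ring
      have hfb : ((b+1).factorial : ℝ) = ((b:ℝ)+1) * b.factorial := by
        rw [Nat.factorial_succ]; push_cast; ring
      have hfn : ((a + (b+1) + 1).factorial : ℝ) ≠ 0 := by positivity
      rw [hfa, hfb]
      simp only [sub_self, zero_pow, pow_succ]
      field_simp
      ring

lemma pow_sub_pow_le_aux {a b : ℝ} (hb : 0 ≤ b) (hba : b ≤ a) :
    ∀ m : ℕ, a ^ m - b ^ m ≤ m * a ^ (m - 1) * (a - b) := by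
  intro m
  induction m with
  | zero => simp
  | succ m ih =>
      have ha : 0 ≤ a := hb.trans hba
      have hbm : b ^ m ≤ a ^ m := pow_le_pow_left₀ hb hba m
      rcases Nat.eq_zero_or_pos m with hm | hm
      · subst hm; simp
      · have h1 : a ^ (m + 1) - b ^ (m + 1) = a * (a ^ m - b ^ m) + (a - b) * b ^ m := by
          ring
        have h3 : a * a ^ (m - 1) = a ^ m := by
          rw [← pow_succ']; congr 1; omega
        have h2 : a * (a ^ m - b ^ m) ≤ a * ((m : ℝ) * a ^ (m - 1) * (a - b)) :=
          mul_le_mul_of_nonneg_left ih ha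
        have h2' : a * ((m : ℝ) * a ^ (m - 1) * (a - b)) = (m : ℝ) * a ^ m * (a - b) := by
          rw [← h3]; ring
        have h4 : (a - b) * b ^ m ≤ (a - b) * a ^ m :=
          mul_le_mul_of_nonneg_left hbm (by linarith)
        push_cast
        nlinarith

lemma pow_lower_aux {a b : ℝ} (hb : 0 ≤ b) (hba : b ≤ a) (hc : a - b ≤ a ^ 3 / 6) (m : ℕ) :
    a ^ m - (m : ℝ) / 6 * a ^ (m + 2) ≤ b ^ m := by
  have ha : 0 ≤ a := hb.trans hba
  have key := pow_sub_pow_le_aux hb hba m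
  rcases Nat.eq_zero_or_pos m with hm | hm
  · subst hm; simp
  · have h7 : a ^ (m - 1) * a ^ 3 = a ^ (m + 2) := by
      rw [← pow_add]; congr 1; omega
    have h6 : (m : ℝ) * a ^ (m - 1) * (a - b) ≤ (m : ℝ) * a ^ (m - 1) * (a ^ 3 / 6) :=
      mul_le_mul_of_nonneg_left hc (by positivity)
    have h8 : (m : ℝ) * a ^ (m - 1) * (a ^ 3 / 6) = (m : ℝ) / 6 * a ^ (m + 2) := by
      rw [← h7]; ring
    linarith

lemma sin_pow_lower {x : ℝ} (hx0 : 0 ≤ x) (hxp : x ≤ π) (m : ℕ) :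
    (π - x) ^ m - (m : ℝ) / 6 * (π - x) ^ (m + 2) ≤ Real.sin x ^ m := by
  have ha : (0:ℝ) ≤ π - x := by linarith
  have hs : Real.sin x = Real.sin (π - x) := (Real.sin_pi_sub x).symm
  refine pow_lower_aux (Real.sin_nonneg_of_nonneg_of_le_pi hx0 hxp) ?_ ?_ m
  · rw [hs]; exact Real.sin_le ha
  · rw [hs]; have := sub_cube_le_sin ha; linarith

theorem B_asymptotics (k : ℕ) (hk : 1 ≤ k) :
    Tendsto (fun n : ℕ => B n k / (π ^ n / (n.factorial : ℝ))) atTop (nhds 1) := by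
  set c : ℝ := ((k - 1 : ℕ) : ℝ) * k * ((k : ℝ) + 1) * π ^ 2 / 6 with hc
  have hc0 : 0 ≤ c := by rw [hc]; positivity
  have key : ∀ n : ℕ, k ≤ n →
      1 - c * (1 / ((n : ℝ) + 1)) ≤ B n k / (π ^ n / (n.factorial : ℝ)) ∧
      B n k / (π ^ n / (n.factorial : ℝ)) ≤ 1 := by
    intro n hn
    have hπ := Real.pi_pos
    have hπn : (0:ℝ) < π ^ n := by positivity
    have hA : (0:ℝ) < ((k - 1).factorial : ℝ) := by exact_mod_cast (k - 1).factorial_pos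
    have hB : (0:ℝ) < ((n - k).factorial : ℝ) := by exact_mod_cast (n - k).factorial_pos
    have hN : (0:ℝ) < ((n).factorial : ℝ) := by exact_mod_cast n.factorial_pos
    have hn1 : (0:ℝ) < (n : ℝ) + 1 := by positivity
    have hn2 : (0:ℝ) < (n : ℝ) + 2 := by positivity
    have I1 := beta_pi (k - 1) (n - k)
    rw [show k - 1 + (n - k) + 1 = n from by omega] at I1
    have I2 := beta_pi (k - 1 + 2) (n - k)
    rw [show k - 1 + 2 + (n - k) + 1 = n + 2 from by omega] at I2
    have e1 : ((k - 1 + 2).factorial : ℝ) = ((k : ℝ) + 1) * ((k : ℝ) * ((k - 1).factorial : ℝ)) := by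
      have h : k - 1 + 2 = (k - 1 + 1) + 1 := by omega
      rw [h, Nat.factorial_succ, Nat.factorial_succ, show k - 1 + 1 = k from by omega]
      push_cast; ring
    have e2 : (((n + 2)).factorial : ℝ) = ((n : ℝ) + 2) * (((n : ℝ) + 1) * ((n).factorial : ℝ)) := by
      rw [Nat.factorial_succ, Nat.factorial_succ]
      push_cast; ring
    rw [e1, e2] at I2
    -- pointwise upper bound
    have hJle : (∫ x in (0:ℝ)..π, Real.sin x ^ (k - 1) * x ^ (n - k))
        ≤ ∫ x in (0:ℝ)..π, (π - x) ^ (k - 1) * x ^ (n - k) := by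
      refine intervalIntegral.integral_mono_on hπ.le ?_ ?_ ?_
      · exact Continuous.intervalIntegrable (by fun_prop) 0 π
      · exact Continuous.intervalIntegrable (by fun_prop) 0 π
      intro x hx
      have hsle : Real.sin x ≤ π - x := by
        rw [← Real.sin_pi_sub]
        exact Real.sin_le (by linarith [hx.2])
      have h1 : Real.sin x ^ (k - 1) ≤ (π - x) ^ (k - 1) :=
        pow_le_pow_left₀ (Real.sin_nonneg_of_nonneg_of_le_pi hx.1 hx.2) hsle _
      exact mul_le_mul_of_nonneg_right h1 (pow_nonneg hx.1 _)
    -- pointwise lower bound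
    have hJge : (∫ x in (0:ℝ)..π, ((π - x) ^ (k - 1) * x ^ (n - k)
          - ((k - 1 : ℕ) : ℝ) / 6 * ((π - x) ^ (k - 1 + 2) * x ^ (n - k))))
        ≤ ∫ x in (0:ℝ)..π, Real.sin x ^ (k - 1) * x ^ (n - k) := by
      refine intervalIntegral.integral_mono_on hπ.le ?_ ?_ ?_
      · exact Continuous.intervalIntegrable (by fun_prop) 0 π
      · exact Continuous.intervalIntegrable (by fun_prop) 0 π
      intro x hx
      have h1 := sin_pow_lower hx.1 hx.2 (k - 1)
      have h2 := mul_le_mul_of_nonneg_right h1 (pow_nonneg hx.1 (n - k))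
      calc (π - x) ^ (k - 1) * x ^ (n - k)
            - ((k - 1 : ℕ) : ℝ) / 6 * ((π - x) ^ (k - 1 + 2) * x ^ (n - k))
          = ((π - x) ^ (k - 1) - ((k - 1 : ℕ) : ℝ) / 6 * (π - x) ^ (k - 1 + 2)) * x ^ (n - k) := by
            ring
        _ ≤ Real.sin x ^ (k - 1) * x ^ (n - k) := h2
    have hsub : (∫ x in (0:ℝ)..π, ((π - x) ^ (k - 1) * x ^ (n - k)
          - ((k - 1 : ℕ) : ℝ) / 6 * ((π - x) ^ (k - 1 + 2) * x ^ (n - k))))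
        = π ^ n * ((k - 1).factorial : ℝ) * ((n - k).factorial : ℝ) / ((n).factorial : ℝ)
          - ((k - 1 : ℕ) : ℝ) / 6 * (π ^ (n + 2) * (((k : ℝ) + 1) * ((k : ℝ) * ((k - 1).factorial : ℝ)))
              * ((n - k).factorial : ℝ) / (((n : ℝ) + 2) * (((n : ℝ) + 1) * ((n).factorial : ℝ)))) := by
      have int1 : IntervalIntegrable (fun x : ℝ => (π - x) ^ (k - 1) * x ^ (n - k))
          MeasureTheory.volume 0 π := Continuous.intervalIntegrable (by fun_prop) 0 π
      have int2 : IntervalIntegrable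
          (fun x : ℝ => ((k - 1 : ℕ) : ℝ) / 6 * ((π - x) ^ (k - 1 + 2) * x ^ (n - k)))
          MeasureTheory.volume 0 π := Continuous.intervalIntegrable (by fun_prop) 0 π
      rw [intervalIntegral.integral_sub int1 int2,
        intervalIntegral.integral_const_mul, I1, I2]
    rw [hsub] at hJge
    have hratio : B n k / (π ^ n / ((n).factorial : ℝ))
        = ((n).factorial : ℝ) / (((k - 1).factorial : ℝ) * ((n - k).factorial : ℝ) * π ^ n)
          * ∫ x in (0:ℝ)..π, Real.sin x ^ (k - 1) * x ^ (n - k) := by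
      simp only [B]
      field_simp
    set D : ℝ := ((n).factorial : ℝ) / (((k - 1).factorial : ℝ) * ((n - k).factorial : ℝ) * π ^ n)
      with hD_def
    have hD : 0 < D := by rw [hD_def]; positivity
    constructor
    · -- lower bound
      rw [hratio]
      have h1 := mul_le_mul_of_nonneg_left hJge hD.le
      have key2 : D * (π ^ n * ((k - 1).factorial : ℝ) * ((n - k).factorial : ℝ) / ((n).factorial : ℝ)
          - ((k - 1 : ℕ) : ℝ) / 6 * (π ^ (n + 2) * (((k : ℝ) + 1) * ((k : ℝ) * ((k - 1).factorial : ℝ)))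
              * ((n - k).factorial : ℝ) / (((n : ℝ) + 2) * (((n : ℝ) + 1) * ((n).factorial : ℝ)))))
          = 1 - c / (((n : ℝ) + 1) * ((n : ℝ) + 2)) := by
        rw [hD_def, hc]
        field_simp
        ring
      have hcmp : c / (((n : ℝ) + 1) * ((n : ℝ) + 2)) ≤ c * (1 / ((n : ℝ) + 1)) := by
        rw [mul_one_div, div_le_div_iff₀ (by positivity) (by positivity)]
        nlinarith [mul_nonneg (mul_nonneg hc0 hn1.le) hn1.le, mul_nonneg hc0 hn1.le]
      linarith
    · -- upper bound
      rw [hratio]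
      have h1 : (∫ x in (0:ℝ)..π, Real.sin x ^ (k - 1) * x ^ (n - k))
          ≤ π ^ n * ((k - 1).factorial : ℝ) * ((n - k).factorial : ℝ) / ((n).factorial : ℝ) := by
        rw [← I1]; exact hJle
      have h2 := mul_le_mul_of_nonneg_left h1 hD.le
      have h3 : D * (π ^ n * ((k - 1).factorial : ℝ) * ((n - k).factorial : ℝ) / ((n).factorial : ℝ))
          = 1 := by
        rw [hD_def]; field_simp
      linarith
  refine tendsto_of_tendsto_of_tendsto_of_le_of_le'
    (g := fun n : ℕ => 1 - c * (1 / ((n : ℝ) + 1))) ?_ tendsto_const_nhds ?_ ?_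
  · have h0 : Tendsto (fun n : ℕ => 1 / ((n : ℝ) + 1)) atTop (nhds 0) :=
      tendsto_one_div_add_atTop_nhds_zero_nat
    have h1 : Tendsto (fun n : ℕ => 1 - c * (1 / ((n : ℝ) + 1))) atTop (nhds (1 - c * 0)) :=
      (tendsto_const_nhds (x := (1:ℝ))).sub (h0.const_mul c)
    simpa using h1
  · filter_upwards [eventually_ge_atTop k] with n hn using (key n hn).1
  · filter_upwards [eventually_ge_atTop k] with n hn using (key n hn).2
end
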